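/- In the MP_d(Λ,Ω) model, for any indices 1 ≤ i < j ≤ d, the covariance of X_i and X_j decomposes over the comonotonic shocks: E[X_i X_j] − E[X_i]·E[X_j] = Σ_{k=1}^{i} ( ∫_{(0,1)} q_{ω_{ik}λ_i}(u)·q_{ω_{jk}λ_j}(u) dμ(u) − ω_{ik}λ_i · ω_{jk}λ_j ), where expectations on the left are taken with respect to the product measure μ^d on (0,1)^d. -/

import Mathlib

open MeasureTheory Set Function

/-- The uniform probability measure on the open interval (0,1):
Lebesgue measure restricted to (0,1). -/
noncomputable def unif : Measure ℝ := volume.restrict (Set.Ioo (0 : ℝ) 1)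

/-- The quantile transform of a cdf `F` on ℕ: `q_F(u) = min {n : u ≤ F n}`. -/
noncomputable def qt (F : ℕ → ℝ) (u : ℝ) : ℕ := sInf {n : ℕ | u ≤ F n}

/-- The Poisson(λ) cumulative distribution function on ℕ. -/
noncomputable def poisCdf (l : ℝ) (n : ℕ) : ℝ :=
  ∑ k ∈ Finset.range (n + 1), Real.exp (-l) * l ^ k / (Nat.factorial k)

/-- The Poisson(λ) probability mass function on ℕ. -/
noncomputable def poisPmf (l : ℝ) (n : ℕ) : ℝ :=
  Real.exp (-l) * l ^ n / (Nat.factorial n)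

/-- `F(n-1)` with the convention `F(-1) = 0`. -/
noncomputable def cdfm1 (F : ℕ → ℝ) (n : ℕ) : ℝ := if n = 0 then 0 else F (n - 1)

instance unif_prob : IsProbabilityMeasure unif :=
  ⟨by simp [unif, Real.volume_Ioo]⟩

lemma poisPmf_nonneg {l : ℝ} (hl : 0 ≤ l) (n : ℕ) : 0 ≤ poisPmf l n := by
  unfold poisPmf; positivity

lemma poisCdf_eq_sum (l : ℝ) (n : ℕ) :
    poisCdf l n = ∑ k ∈ Finset.range (n + 1), poisPmf l k := rfl

lemma poisCdf_succ (l : ℝ) (n : ℕ) :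
    poisCdf l (n + 1) = poisCdf l n + poisPmf l (n + 1) := by
  simp [poisCdf_eq_sum, Finset.sum_range_succ]

lemma poisCdf_zero (l : ℝ) : poisCdf l 0 = poisPmf l 0 := by
  simp [poisCdf_eq_sum]

lemma poisCdf_nonneg {l : ℝ} (hl : 0 ≤ l) (n : ℕ) : 0 ≤ poisCdf l n := by
  rw [poisCdf_eq_sum]
  exact Finset.sum_nonneg fun k _ => poisPmf_nonneg hl k

lemma monotone_poisCdf {l : ℝ} (hl : 0 ≤ l) : Monotone (poisCdf l) :=
  monotone_nat_of_le_succ fun n => by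
    rw [poisCdf_succ]; nlinarith [poisPmf_nonneg hl (n + 1)]

lemma hasSum_poisPmf {l : ℝ} : HasSum (poisPmf l) 1 := by
  have h : HasSum (fun n : ℕ => l ^ n / (Nat.factorial n : ℝ)) (Real.exp l) := by
    have hs := Real.summable_pow_div_factorial l
    have : ∑' n : ℕ, l ^ n / (Nat.factorial n : ℝ) = Real.exp l := by
      rw [Real.exp_eq_exp_ℝ, NormedSpace.exp_eq_tsum_div]
    exact this ▸ hs.hasSum
  have h2 := h.mul_left (Real.exp (-l))
  have : (fun n : ℕ => Real.exp (-l) * (l ^ n / (Nat.factorial n : ℝ))) = poisPmf l := by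
    funext n; unfold poisPmf; ring
  rw [this] at h2
  rw [show (1 : ℝ) = Real.exp (-l) * Real.exp l by
    rw [← Real.exp_add]; simp]
  exact h2

lemma summable_poisPmf {l : ℝ} : Summable (poisPmf l) := hasSum_poisPmf.summable

lemma tendsto_poisCdf {l : ℝ} : Filter.Tendsto (poisCdf l) Filter.atTop (nhds 1) := by
  have h : Filter.Tendsto (fun n : ℕ => ∑ k ∈ Finset.range n, poisPmf l k)
      Filter.atTop (nhds 1) := (hasSum_poisPmf (l := l)).tendsto_sum_nat
  have h2 : Filter.Tendsto (fun n : ℕ => n + 1) Filter.atTop Filter.atTop :=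
    Filter.tendsto_add_atTop_nat 1
  have h3 := h.comp h2
  have : poisCdf l = (fun n : ℕ => ∑ k ∈ Finset.range n, poisPmf l k) ∘ (fun n : ℕ => n + 1) :=
    funext fun n => poisCdf_eq_sum l n
  rw [this]
  exact h3

lemma poisCdf_le_one {l : ℝ} (hl : 0 ≤ l) (n : ℕ) : poisCdf l n ≤ 1 := by
  rw [poisCdf_eq_sum]
  exact (sum_le_hasSum _ (fun k _ => poisPmf_nonneg hl k) hasSum_poisPmf)

lemma cdfm1_nonneg {l : ℝ} (hl : 0 ≤ l) (n : ℕ) : 0 ≤ cdfm1 (poisCdf l) n := by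
  unfold cdfm1; split
  · exact le_refl 0
  · exact poisCdf_nonneg hl _

lemma poisCdf_sub_cdfm1 {l : ℝ} (n : ℕ) :
    poisCdf l n - cdfm1 (poisCdf l) n = poisPmf l n := by
  unfold cdfm1
  cases n with
  | zero => simp [poisCdf_zero]
  | succ m => simp [poisCdf_succ]

/-! ### Quantile transform lemmas -/

lemma qt_eq_of_mem_Ioc {F : ℕ → ℝ} (hF : Monotone F) {n : ℕ} {u : ℝ}
    (h : u ∈ Set.Ioc (cdfm1 F n) (F n)) : qt F u = n := by
  obtain ⟨h1, h2⟩ := h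
  unfold qt
  refine le_antisymm (Nat.sInf_le h2) ?_
  by_contra hlt
  push_neg at hlt
  have hne : {m : ℕ | u ≤ F m}.Nonempty := ⟨n, h2⟩
  have hmem := Nat.sInf_mem hne
  set m := sInf {m : ℕ | u ≤ F m} with hm
  have hmn : m < n := hlt
  have hn0 : n ≠ 0 := by omega
  have : F m ≤ cdfm1 F n := by
    unfold cdfm1
    rw [if_neg hn0]
    exact hF (Nat.le_sub_one_of_lt hmn)
  exact absurd hmem (not_le.mpr (lt_of_le_of_lt this h1))

lemma measurable_qt {F : ℕ → ℝ} (hF : Monotone F) : Measurable (qt F) := by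
  apply measurable_to_countable'
  intro n
  cases n with
  | zero =>
    have : qt F ⁻¹' {0} = Set.Iic (F 0) ∪ ⋂ m, Set.Ioi (F m) := by
      ext u
      simp only [Set.mem_preimage, Set.mem_singleton_iff, Set.mem_union, Set.mem_Iic,
        Set.mem_iInter, Set.mem_Ioi]
      unfold qt
      rw [Nat.sInf_eq_zero]
      constructor
      · rintro (h | h)
        · exact Or.inl h
        · refine Or.inr fun m => ?_
          by_contra hc
          push_neg at hc
          exact absurd h (Set.nonempty_iff_ne_empty.mp ⟨m, hc⟩)
      · rintro (h | h)
        · exact Or.inl h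
        · refine Or.inr (Set.eq_empty_iff_forall_notMem.mpr fun m hm => ?_)
          exact absurd hm (not_le.mpr (h m))
    rw [this]
    exact measurableSet_Iic.union (MeasurableSet.iInter fun m => measurableSet_Ioi)
  | succ k =>
    have : qt F ⁻¹' {k + 1} = Set.Ioc (F k) (F (k + 1)) := by
      ext u
      simp only [Set.mem_preimage, Set.mem_singleton_iff, Set.mem_Ioc]
      constructor
      · intro h
        have hne : {m : ℕ | u ≤ F m}.Nonempty := by
          by_contra hc
          rw [Set.not_nonempty_iff_eq_empty] at hc
          unfold qt at h
          rw [hc, Nat.sInf_empty] at h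
          exact Nat.succ_ne_zero k h.symm
        have hmem := Nat.sInf_mem hne
        rw [show sInf {m : ℕ | u ≤ F m} = qt F u from rfl, h] at hmem
        refine ⟨?_, hmem⟩
        by_contra hc
        push_neg at hc
        have : qt F u ≤ k := Nat.sInf_le hc
        omega
      · intro h
        exact qt_eq_of_mem_Ioc hF (by simpa [cdfm1] using h)
    rw [this]
    exact measurableSet_Ioc

lemma ioo_subset_iUnion {l : ℝ} (hl : 0 ≤ l) :
    Set.Ioo (0:ℝ) 1 ⊆ ⋃ n, Set.Ioc (cdfm1 (poisCdf l) n) (poisCdf l n) := by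
  intro u hu
  set F := poisCdf l with hFdef
  have hF : Monotone F := monotone_poisCdf hl
  have hex : ∃ N, u ≤ F N := by
    have := tendsto_poisCdf (l := l)
    have h2 : ∀ᶠ n in Filter.atTop, F n ∈ Set.Ioi u :=
      this.eventually (Ioi_mem_nhds hu.2)
    obtain ⟨N, hN⟩ := h2.exists
    exact ⟨N, le_of_lt hN⟩
  have hne : {m : ℕ | u ≤ F m}.Nonempty := ⟨hex.choose, hex.choose_spec⟩
  set n := sInf {m : ℕ | u ≤ F m} with hn
  have hmem := Nat.sInf_mem hne
  refine Set.mem_iUnion.mpr ⟨n, ?_, hmem⟩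
  unfold cdfm1
  split
  · exact hu.1
  · rename_i h0
    by_contra hc
    push_neg at hc
    have : n - 1 ∈ {m : ℕ | u ≤ F m} := hc
    have := Nat.sInf_le this
    omega

lemma iUnion_subset_ioc {l : ℝ} (hl : 0 ≤ l) :
    (⋃ n, Set.Ioc (cdfm1 (poisCdf l) n) (poisCdf l n)) ⊆ Set.Ioc (0:ℝ) 1 := by
  rintro u hu
  obtain ⟨n, hn⟩ := Set.mem_iUnion.mp hu
  exact ⟨lt_of_le_of_lt (cdfm1_nonneg hl n) hn.1, le_trans hn.2 (poisCdf_le_one hl n)⟩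

lemma unif_eq_restrict_iUnion {l : ℝ} (hl : 0 ≤ l) :
    unif = volume.restrict (⋃ n, Set.Ioc (cdfm1 (poisCdf l) n) (poisCdf l n)) := by
  unfold unif
  apply Measure.restrict_congr_set
  rw [Filter.eventuallyEq_set]
  have h1 := ioo_subset_iUnion hl
  have h2 := iUnion_subset_ioc hl
  have : ∀ᵐ x ∂(volume : Measure ℝ), x ≠ 1 := by
    simp [ae_iff]
  filter_upwards [this] with x hx
  constructor
  · intro h; exact h1 h
  · intro h
    have := h2 h
    exact ⟨this.1, lt_of_le_of_ne this.2 hx⟩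

lemma pairwise_disjoint_T {l : ℝ} (hl : 0 ≤ l) :
    Pairwise (Disjoint on fun n => Set.Ioc (cdfm1 (poisCdf l) n) (poisCdf l n)) := by
  have hF : Monotone (poisCdf l) := monotone_poisCdf hl
  have key : ∀ m n : ℕ, m < n →
      Disjoint (Set.Ioc (cdfm1 (poisCdf l) m) (poisCdf l m))
        (Set.Ioc (cdfm1 (poisCdf l) n) (poisCdf l n)) := by
    intro m n hmn
    rw [Set.Ioc_disjoint_Ioc]
    refine le_trans (min_le_left _ _) (le_trans ?_ (le_max_right _ _))
    unfold cdfm1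
    rw [if_neg (by omega : n ≠ 0)]
    exact hF (by omega)
  intro m n hmn
  rcases lt_or_gt_of_ne hmn with h | h
  · exact key m n h
  · exact (key n m h).symm

/-! ### Integration of functions of the quantile transform -/

lemma volume_T {l : ℝ} (n : ℕ) :
    volume (Set.Ioc (cdfm1 (poisCdf l) n) (poisCdf l n)) = ENNReal.ofReal (poisPmf l n) := by
  rw [Real.volume_Ioc, poisCdf_sub_cdfm1]

lemma integrable_comp_qt {l : ℝ} (hl : 0 ≤ l) {f : ℕ → ℝ}
    (hf : Summable fun n => ‖f n‖ * poisPmf l n) :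
    Integrable (fun u => f (qt (poisCdf l) u)) unif := by
  have hF := monotone_poisCdf hl
  constructor
  · exact ((measurable_from_top.comp (measurable_qt hF)) :
      Measurable fun u => f (qt (poisCdf l) u)).aestronglyMeasurable
  · show (∫⁻ u, (‖f (qt (poisCdf l) u)‖₊ : ENNReal) ∂unif) < ⊤
    rw [unif_eq_restrict_iUnion hl,
      lintegral_iUnion (fun n => measurableSet_Ioc) (pairwise_disjoint_T hl)]
    have heq : ∀ n : ℕ, ∫⁻ u in Set.Ioc (cdfm1 (poisCdf l) n) (poisCdf l n),
        (‖f (qt (poisCdf l) u)‖₊ : ENNReal) ∂volume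
        = ENNReal.ofReal (‖f n‖ * poisPmf l n) := by
      intro n
      rw [setLIntegral_congr_fun measurableSet_Ioc
        (fun u hu => by rw [qt_eq_of_mem_Ioc hF hu])]
      rw [setLIntegral_const, volume_T, ENNReal.ofReal_mul (norm_nonneg _),
        ofReal_norm, enorm_eq_nnnorm]
    simp_rw [heq]
    rw [← ENNReal.ofReal_tsum_of_nonneg
      (fun n => mul_nonneg (norm_nonneg _) (poisPmf_nonneg hl n)) hf]
    exact ENNReal.ofReal_lt_top

lemma integral_comp_qt {l : ℝ} (hl : 0 ≤ l) {f : ℕ → ℝ}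
    (hf : Summable fun n => ‖f n‖ * poisPmf l n) :
    ∫ u, f (qt (poisCdf l) u) ∂unif = ∑' n, f n * poisPmf l n := by
  have hF := monotone_poisCdf hl
  have hint := integrable_comp_qt hl hf
  rw [unif_eq_restrict_iUnion hl] at hint ⊢
  rw [integral_iUnion (fun n => measurableSet_Ioc) (pairwise_disjoint_T hl) hint]
  congr 1
  funext n
  rw [setIntegral_congr_fun measurableSet_Ioc
    (fun u hu => by rw [qt_eq_of_mem_Ioc hF hu])]
  rw [setIntegral_const, measureReal_def, volume_T, smul_eq_mul,
    ENNReal.toReal_ofReal (poisPmf_nonneg hl n), mul_comm]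

/-! ### Poisson moments -/

lemma succ_mul_poisPmf {l : ℝ} (n : ℕ) :
    ((n : ℝ) + 1) * poisPmf l (n + 1) = l * poisPmf l n := by
  unfold poisPmf
  rw [pow_succ, Nat.factorial_succ]
  have h1 : (Nat.factorial n : ℝ) ≠ 0 := Nat.cast_ne_zero.mpr (Nat.factorial_ne_zero n)
  have h2 : ((n : ℝ) + 1) ≠ 0 := by positivity
  push_cast
  field_simp

lemma summable_id_mul_poisPmf {l : ℝ} :
    Summable (fun n : ℕ => (n : ℝ) * poisPmf l n) := by
  rw [← summable_nat_add_iff 1]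
  have : (fun n : ℕ => ((n + 1 : ℕ) : ℝ) * poisPmf l (n + 1))
      = fun n : ℕ => l * poisPmf l n := by
    funext n; push_cast; rw [succ_mul_poisPmf]
  rw [this]
  exact summable_poisPmf.mul_left l

lemma tsum_id_mul_poisPmf {l : ℝ} :
    ∑' n : ℕ, (n : ℝ) * poisPmf l n = l := by
  rw [summable_id_mul_poisPmf.tsum_eq_zero_add]
  simp only [Nat.cast_zero, zero_mul, zero_add, Nat.cast_add, Nat.cast_one]
  rw [show (fun n : ℕ => ((n : ℝ) + 1) * poisPmf l (n + 1))
    = fun n : ℕ => l * poisPmf l n from funext fun n => succ_mul_poisPmf n]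
  rw [tsum_mul_left, hasSum_poisPmf.tsum_eq, mul_one]

lemma summable_sq_mul_poisPmf {l : ℝ} :
    Summable (fun n : ℕ => ((n : ℝ)) ^ 2 * poisPmf l n) := by
  have hc : Summable (fun n : ℕ => (n : ℝ) * ((n : ℝ) - 1) * poisPmf l n) := by
    rw [← summable_nat_add_iff 2]
    have : (fun n : ℕ => ((n + 2 : ℕ) : ℝ) * (((n + 2 : ℕ) : ℝ) - 1) * poisPmf l (n + 2))
        = fun n : ℕ => l ^ 2 * poisPmf l n := by
      funext n
      push_cast
      have e1 : ((n : ℝ) + 2) * poisPmf l (n + 2) = l * poisPmf l (n + 1) := by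
        have h := succ_mul_poisPmf (l := l) (n + 1)
        push_cast at h
        simp only [show n + 1 + 1 = n + 2 from rfl] at h
        linarith [h]
      have e2 : ((n : ℝ) + 1) * poisPmf l (n + 1) = l * poisPmf l n :=
        succ_mul_poisPmf n
      linear_combination ((n : ℝ) + 1) * e1 + l * e2
    rw [this]
    exact summable_poisPmf.mul_left _
  have : (fun n : ℕ => ((n : ℝ)) ^ 2 * poisPmf l n)
      = (fun n : ℕ => (n : ℝ) * ((n : ℝ) - 1) * poisPmf l n)
        + (fun n : ℕ => (n : ℝ) * poisPmf l n) := by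
    funext n; simp only [Pi.add_apply]; ring
  rw [this]
  exact hc.add summable_id_mul_poisPmf

/-! ### Specializations -/

lemma integrable_qt_real {l : ℝ} (hl : 0 ≤ l) :
    Integrable (fun u => (qt (poisCdf l) u : ℝ)) unif :=
  integrable_comp_qt hl (f := fun n => (n : ℝ))
    (by simpa [Real.norm_natCast] using summable_id_mul_poisPmf (l := l))

lemma integral_qt_real {l : ℝ} (hl : 0 ≤ l) :
    ∫ u, (qt (poisCdf l) u : ℝ) ∂unif = l := by
  rw [integral_comp_qt hl
    (by simpa [Real.norm_natCast] using summable_id_mul_poisPmf (l := l)),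
    tsum_id_mul_poisPmf]

lemma integrable_qt_sq {l : ℝ} (hl : 0 ≤ l) :
    Integrable (fun u => ((qt (poisCdf l) u : ℝ)) ^ 2) unif :=
  integrable_comp_qt hl (f := fun n => (n : ℝ) ^ 2)
    (by
      have h : ∀ n : ℕ, ‖((n : ℝ)) ^ 2‖ = ((n : ℝ)) ^ 2 := fun n => by
        rw [Real.norm_eq_abs, abs_of_nonneg (by positivity)]
      simp only [h]
      exact summable_sq_mul_poisPmf)

lemma measurable_qt_real {l : ℝ} (hl : 0 ≤ l) :
    Measurable (fun u => (qt (poisCdf l) u : ℝ)) :=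
  measurable_from_top.comp (measurable_qt (monotone_poisCdf hl))

lemma integrable_qt_mul_qt {l l' : ℝ} (hl : 0 ≤ l) (hl' : 0 ≤ l') :
    Integrable (fun u => (qt (poisCdf l) u : ℝ) * (qt (poisCdf l') u : ℝ)) unif := by
  apply Integrable.mono' ((integrable_qt_sq hl).add (integrable_qt_sq hl'))
  · exact ((measurable_qt_real hl).mul (measurable_qt_real hl')).aestronglyMeasurable
  · refine Filter.Eventually.of_forall fun u => ?_
    have ha : (0 : ℝ) ≤ (qt (poisCdf l) u : ℝ) := Nat.cast_nonneg _
    have hb : (0 : ℝ) ≤ (qt (poisCdf l') u : ℝ) := Nat.cast_nonneg _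
    rw [Real.norm_eq_abs, abs_of_nonneg (mul_nonneg ha hb)]
    simp only [Pi.add_apply]
    nlinarith

/-! ### Product measure machinery -/

/-- The product measure μ^d of the uniform measure on (0,1) over coordinates. -/
noncomputable def pmeas (d : ℕ) : Measure (Fin d → ℝ) := Measure.pi (fun _ => unif)

lemma measurePreserving_eval_unif (d : ℕ) (k : Fin d) :
    MeasurePreserving (fun u : Fin d → ℝ => u k) (pmeas d) unif := by
  refine ⟨measurable_pi_apply k, ?_⟩
  apply Measure.ext
  intro s hs
  rw [Measure.map_apply (measurable_pi_apply k) hs]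
  have hpre : (fun u : Fin d → ℝ => u k) ⁻¹' s
      = Set.pi Set.univ (Function.update (fun _ : Fin d => (Set.univ : Set ℝ)) k s) :=
    Set.eval_preimage
  rw [hpre]
  unfold pmeas
  rw [Measure.pi_pi]
  rw [Finset.prod_eq_single k]
  · rw [Function.update_self]
  · intro b _ hbk
    rw [Function.update_of_ne hbk]
    exact measure_univ
  · intro h
    exact absurd (Finset.mem_univ k) h

lemma measurePreserving_pair_unif (d : ℕ) (k l : Fin d) (hkl : k ≠ l) :
    MeasurePreserving (fun u : Fin d → ℝ => (u k, u l)) (pmeas d) (unif.prod unif) := by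
  classical
  have hm : Measurable fun u : Fin d → ℝ => (u k, u l) :=
    (measurable_pi_apply k).prodMk (measurable_pi_apply l)
  refine ⟨hm, ?_⟩
  refine (Measure.prod_eq fun s t hs ht => ?_).symm
  rw [Measure.map_apply hm (hs.prod ht)]
  have hpre : (fun u : Fin d → ℝ => (u k, u l)) ⁻¹' (s ×ˢ t)
      = Set.pi Set.univ (fun i => if i = k then s else if i = l then t else Set.univ) := by
    ext u
    simp only [Set.mem_preimage, Set.mem_prod, Set.mem_pi, Set.mem_univ, true_implies]
    constructor
    · rintro ⟨h1, h2⟩ i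
      by_cases hik : i = k
      · subst hik; simpa [if_pos rfl] using h1
      · by_cases hil : i = l
        · subst hil; simp [if_neg hik, if_pos rfl, h2]
        · simp [if_neg hik, if_neg hil]
    · intro h
      constructor
      · have := h k; simpa using this
      · have := h l
        rw [if_neg hkl.symm, if_pos rfl] at this
        exact this
  rw [hpre]
  unfold pmeas
  rw [Measure.pi_pi]
  rw [← Finset.mul_prod_erase Finset.univ _ (Finset.mem_univ k),
    ← Finset.mul_prod_erase (Finset.univ.erase k) _
      (Finset.mem_erase.mpr ⟨hkl.symm, Finset.mem_univ l⟩)]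
  have h1 : unif (if k = k then s else if k = l then t else Set.univ) = unif s := by
    rw [if_pos rfl]
  have h2 : unif (if l = k then s else if l = l then t else Set.univ) = unif t := by
    rw [if_neg hkl.symm, if_pos rfl]
  rw [h1, h2]
  rw [Finset.prod_eq_one]
  · ring
  · intro x hx
    rw [Finset.mem_erase, Finset.mem_erase] at hx
    rw [if_neg hx.2.1, if_neg hx.1]
    exact measure_univ

lemma integral_eval_comp {d : ℕ} (k : Fin d) {f : ℝ → ℝ} (hf : Measurable f) :
    ∫ u, f (u k) ∂(pmeas d) = ∫ x, f x ∂unif := by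
  rw [← (measurePreserving_eval_unif d k).map_eq,
    integral_map (measurable_pi_apply k).aemeasurable hf.aestronglyMeasurable]

lemma integrable_eval_comp {d : ℕ} (k : Fin d) {f : ℝ → ℝ} (hfm : AEStronglyMeasurable f unif)
    (hf : Integrable f unif) : Integrable (fun u : Fin d → ℝ => f (u k)) (pmeas d) :=
  ((measurePreserving_eval_unif d k).integrable_comp hfm).mpr hf

lemma integral_pair_comp {d : ℕ} (k l : Fin d) (hkl : k ≠ l) {f g : ℝ → ℝ}
    (hf : Measurable f) (hg : Measurable g) :
    ∫ u, f (u k) * g (u l) ∂(pmeas d) = (∫ x, f x ∂unif) * ∫ x, g x ∂unif := by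
  rw [← integral_prod_mul f g, ← (measurePreserving_pair_unif d k l hkl).map_eq,
    integral_map ((measurable_pi_apply k).prodMk (measurable_pi_apply l)).aemeasurable
      (((hf.comp measurable_fst).mul (hg.comp measurable_snd)).aestronglyMeasurable
        (f := fun z : ℝ × ℝ => f z.1 * g z.2))]

lemma integrable_pair_comp {d : ℕ} (k l : Fin d) (hkl : k ≠ l) {f g : ℝ → ℝ}
    (hfm : Measurable f) (hgm : Measurable g)
    (hf : Integrable f unif) (hg : Integrable g unif) :
    Integrable (fun u : Fin d → ℝ => f (u k) * g (u l)) (pmeas d) :=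
  ((measurePreserving_pair_unif d k l hkl).integrable_comp
    ((hfm.comp measurable_fst).mul (hgm.comp measurable_snd)).aestronglyMeasurable).mpr
    (hf.mul_prod hg)

/-! ### Covariance decomposition for sums of coordinatewise functions -/

lemma cov_sum {d : ℕ} {I J : Finset (Fin d)} (hIJ : I ⊆ J) (f g : Fin d → ℝ → ℝ)
    (hfm : ∀ k ∈ I, Measurable (f k)) (hgm : ∀ l ∈ J, Measurable (g l))
    (hfi : ∀ k ∈ I, Integrable (f k) unif) (hgi : ∀ l ∈ J, Integrable (g l) unif)
    (hfg : ∀ k ∈ I, Integrable (fun x => f k x * g k x) unif) :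
    ∫ u, (∑ k ∈ I, f k (u k)) * (∑ l ∈ J, g l (u l)) ∂(pmeas d)
      - (∫ u, ∑ k ∈ I, f k (u k) ∂(pmeas d)) * (∫ u, ∑ l ∈ J, g l (u l) ∂(pmeas d))
    = ∑ k ∈ I, ((∫ x, f k x * g k x ∂unif)
        - (∫ x, f k x ∂unif) * (∫ x, g k x ∂unif)) := by
  have hprod : ∀ k ∈ I, ∀ l ∈ J,
      Integrable (fun u : Fin d → ℝ => f k (u k) * g l (u l)) (pmeas d) := by
    intro k hk l hl
    by_cases hkl : k = l
    · subst hkl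
      exact integrable_eval_comp k
        ((hfm k hk).mul (hgm k hl)).aestronglyMeasurable (hfg k hk)
    · exact integrable_pair_comp k l hkl (hfm k hk) (hgm l hl) (hfi k hk) (hgi l hl)
  have h1 : ∫ u, (∑ k ∈ I, f k (u k)) * (∑ l ∈ J, g l (u l)) ∂(pmeas d)
      = ∑ k ∈ I, ∑ l ∈ J, ∫ u, f k (u k) * g l (u l) ∂(pmeas d) := by
    simp_rw [Finset.sum_mul_sum]
    rw [integral_finset_sum I
      (fun k hk => integrable_finset_sum J (fun l hl => hprod k hk l hl))]
    exact Finset.sum_congr rfl fun k hk =>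
      integral_finset_sum J fun l hl => hprod k hk l hl
  have h2 : ∫ u, ∑ k ∈ I, f k (u k) ∂(pmeas d) = ∑ k ∈ I, ∫ x, f k x ∂unif := by
    rw [integral_finset_sum I
      (fun k hk => integrable_eval_comp k (hfi k hk).aestronglyMeasurable (hfi k hk))]
    exact Finset.sum_congr rfl fun k hk => integral_eval_comp k (hfm k hk)
  have h3 : ∫ u, ∑ l ∈ J, g l (u l) ∂(pmeas d) = ∑ l ∈ J, ∫ x, g l x ∂unif := by
    rw [integral_finset_sum J
      (fun l hl => integrable_eval_comp l (hgi l hl).aestronglyMeasurable (hgi l hl))]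
    exact Finset.sum_congr rfl fun l hl => integral_eval_comp l (hgm l hl)
  rw [h1, h2, h3, Finset.sum_mul_sum, ← Finset.sum_sub_distrib]
  apply Finset.sum_congr rfl
  intro k hk
  rw [← Finset.sum_sub_distrib]
  rw [Finset.sum_eq_single_of_mem k (hIJ hk)]
  · congr 1
    exact integral_eval_comp k ((hfm k hk).mul (hgm k (hIJ hk)))
  · intro l hl hlk
    rw [integral_pair_comp k l (Ne.symm hlk) (hfm k hk) (hgm l hl), sub_self]

/-- Component `i` of the MP_d(Λ,Ω) vector: `X_i(u) = Σ_{j ≤ i} q_{ω_{ij} λ_i}(u_j)`. -/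
noncomputable def mpX (d : ℕ) (lam : Fin d → ℝ) (om : Fin d → Fin d → ℝ)
    (i : Fin d) (u : Fin d → ℝ) : ℕ :=
  ∑ j ∈ Finset.Iic i, qt (poisCdf (om i j * lam i)) (u j)

/-- In the MP_d(Λ,Ω) model, for `i < j`, the covariance of `X_i` and `X_j` decomposes over
the comonotonic shocks:
`cov(X_i, X_j) = Σ_{k ≤ i} (cov of the comonotonic pair (Z_{ik}, Z_{jk}))`. -/
theorem mp_cov_decomposition (d : ℕ) (hd : 2 ≤ d)
    (lam : Fin d → ℝ) (hlam : ∀ r, 0 < lam r)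
    (om : Fin d → Fin d → ℝ)
    (hom0 : ∀ r s : Fin d, s ≤ r → 0 ≤ om r s)
    (hom1 : ∀ r s : Fin d, s ≤ r → om r s ≤ 1)
    (h11 : om ⟨0, by omega⟩ ⟨0, by omega⟩ = 1)
    (hsum : ∀ r : Fin d, ∑ s ∈ Finset.Iic r, om r s = 1)
    (i j : Fin d) (hij : i < j) :
    ∫ u, (mpX d lam om i u : ℝ) * (mpX d lam om j u : ℝ) ∂(pmeas d)
        - (∫ u, (mpX d lam om i u : ℝ) ∂(pmeas d))
            * (∫ u, (mpX d lam om j u : ℝ) ∂(pmeas d))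
      = ∑ k ∈ Finset.Iic i,
          (∫ u, (qt (poisCdf (om i k * lam i)) u : ℝ)
              * (qt (poisCdf (om j k * lam j)) u : ℝ) ∂unif
            - (om i k * lam i) * (om j k * lam j)) := by
  have hsub : Finset.Iic i ⊆ Finset.Iic j := Finset.Iic_subset_Iic.mpr hij.le
  have hAnn : ∀ k ∈ Finset.Iic i, 0 ≤ om i k * lam i := fun k hk =>
    mul_nonneg (hom0 i k (Finset.mem_Iic.mp hk)) (hlam i).le
  have hBnn : ∀ l ∈ Finset.Iic j, 0 ≤ om j l * lam j := fun l hl =>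
    mul_nonneg (hom0 j l (Finset.mem_Iic.mp hl)) (hlam j).le
  have hcast : ∀ (r : Fin d) (u : Fin d → ℝ), ((mpX d lam om r u : ℕ) : ℝ)
      = ∑ k ∈ Finset.Iic r, ((qt (poisCdf (om r k * lam r)) (u k) : ℕ) : ℝ) := by
    intro r u; unfold mpX; push_cast; rfl
  simp_rw [hcast]
  have key := cov_sum hsub
    (fun k x => ((qt (poisCdf (om i k * lam i)) x : ℕ) : ℝ))
    (fun l x => ((qt (poisCdf (om j l * lam j)) x : ℕ) : ℝ))
    (fun k hk => measurable_qt_real (hAnn k hk))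
    (fun l hl => measurable_qt_real (hBnn l hl))
    (fun k hk => integrable_qt_real (hAnn k hk))
    (fun l hl => integrable_qt_real (hBnn l hl))
    (fun k hk => integrable_qt_mul_qt (hAnn k hk) (hBnn k (hsub hk)))
  beta_reduce at key
  rw [key]
  exact Finset.sum_congr rfl fun k hk => by
    rw [integral_qt_real (hAnn k hk), integral_qt_real (hBnn k (hsub hk))]
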